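/- Let F be a 4×4 real matrix with Fᵀ = −F, and set s = F₁₂² + F₁₃² + F₁₄² + F₂₃² + F₂₄² + F₃₄² and P = F₁₂F₃₄ − F₁₃F₂₄ + F₁₄F₂₃. Then: (i) det(1 − F) = 1 + s if and only if P = 0; and (ii) det(1 − F) = (1 + s/2)² if and only if (F₃₄, −F₂₄, F₂₃) = (F₁₂, F₁₃, F₁₄) or (F₃₄, −F₂₄, F₂₃) = −(F₁₂, F₁₃, F₁₄). -/

import Mathlib

open Matrix

set_option maxHeartbeats 1000000 in
/-- Equality cases in the Born–Infeld energy bounds: with `s = |F|²` and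
`P` the Pfaffian, `det(1−F) = 1+s ↔ P = 0`, and `det(1−F) = (1+s/2)²` iff `F`
is self-dual or anti-self-dual. -/
theorem det_one_sub_antisymm_four_equality_cases (F : Matrix (Fin 4) (Fin 4) ℝ)
    (hF : Fᵀ = -F) :
    ((1 - F).det =
        1 + (F 0 1 ^ 2 + F 0 2 ^ 2 + F 0 3 ^ 2 + F 1 2 ^ 2 + F 1 3 ^ 2 + F 2 3 ^ 2) ↔
      F 0 1 * F 2 3 - F 0 2 * F 1 3 + F 0 3 * F 1 2 = 0) ∧
    ((1 - F).det =
        (1 + (F 0 1 ^ 2 + F 0 2 ^ 2 + F 0 3 ^ 2 + F 1 2 ^ 2 + F 1 3 ^ 2 + F 2 3 ^ 2) / 2) ^ 2 ↔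
      ((F 2 3, -(F 1 3), F 1 2) = (F 0 1, F 0 2, F 0 3) ∨
        (F 2 3, -(F 1 3), F 1 2) = -(F 0 1, F 0 2, F 0 3))) := by
  have h : ∀ i j, F j i = -F i j := fun i j => by
    have := congrFun (congrFun hF i) j
    simpa [Matrix.transpose_apply, Matrix.neg_apply] using this
  set a := F 0 1; set b := F 0 2; set c := F 0 3
  set d := F 1 2; set e := F 1 3; set f := F 2 3
  have hdet : (1 - F).det = 1 + (a^2+b^2+c^2+d^2+e^2+f^2) + (a*f - b*e + c*d)^2 := by
    have hM : (1 - F) = !![1, -a, -b, -c; a, 1, -d, -e; b, d, 1, -f; c, e, f, 1] := by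
      ext i j
      fin_cases i <;> fin_cases j <;>
        simp [Matrix.sub_apply, Matrix.one_apply] <;>
        linarith [h 0 0, h 1 1, h 2 2, h 3 3, h 0 1, h 0 2, h 0 3, h 1 2, h 1 3, h 2 3]
    rw [hM]
    simp [Matrix.det_succ_row_zero, Fin.sum_univ_succ, Fin.succAbove,
      Fin.castSucc, Fin.castAdd, Fin.castLE]
    ring
  rw [hdet]
  constructor
  · constructor
    · intro hp; nlinarith [sq_nonneg (a*f - b*e + c*d)]
    · intro hp; rw [hp]; ring
  · simp only [Prod.neg_mk, Prod.mk.injEq]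
    constructor
    · intro hp
      have key : ((a-f)^2+(b+e)^2+(c-d)^2) * ((a+f)^2+(b-e)^2+(c+d)^2) = 0 := by
        linear_combination -4 * hp
      rcases mul_eq_zero.1 key with hk | hk
      · left
        refine ⟨?_, ?_, ?_⟩ <;>
          nlinarith [sq_nonneg (a-f), sq_nonneg (b+e), sq_nonneg (c-d)]
      · right
        refine ⟨?_, ?_, ?_⟩ <;>
          nlinarith [sq_nonneg (a+f), sq_nonneg (b-e), sq_nonneg (c+d)]
    · rintro (⟨h1, h2, h3⟩ | ⟨h1, h2, h3⟩)
      · have he : e = -b := by linarith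
        rw [h1, he, h3]; ring
      · have he : e = b := by linarith
        have hd : d = -c := by linarith
        rw [h1, he, hd]; ring
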